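/- If a(t) is a solution of the dyadic system with a_j(0) ≥ 0 for all j, then a_j(t) > 0 for all j and all t > 0. -/

import Mathlib

open Real Set MeasureTheory Finset Filter

noncomputable def lam : ℝ := (2:ℝ) ^ ((5:ℝ)/2)

/-- Right-hand side of the dyadic system: `da_j/dt = λ^{j-1} a_{j-1}² − λ^j a_j a_{j+1} + f_j`
with `a_{-1}=0`, forcing `f_0 > 0`, `f_j = 0` for `j ≥ 1`. -/
noncomputable def dyadicRHS (f0 : ℝ) (a : ℕ → ℝ) : ℕ → ℝ
  | 0 => -(a 0 * a 1) + f0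
  | (j+1) => lam ^ j * (a j)^2 - lam ^ (j+1) * a (j+1) * a (j+2)

/-- A weak (= classical) solution of the dyadic system on `[0,∞)`: an `ℓ²`-valued
function whose components are differentiable and satisfy the ODEs. -/
def IsDyadicSolution (f0 : ℝ) (a : ℝ → ℕ → ℝ) : Prop :=
  (∀ t ∈ Ici (0:ℝ), Summable (fun j => (a t j)^2)) ∧
  (∀ j, ∀ t ∈ Ici (0:ℝ), HasDerivWithinAt (fun s => a s j) (dyadicRHS f0 (a t) j) (Ici 0) t)

noncomputable def Gint (a : ℝ → ℕ → ℝ) (j : ℕ) (t : ℝ) : ℝ :=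
  ∫ s in (0:ℝ)..t, lam ^ j * a s (j+1)

noncomputable def Faux (a : ℝ → ℕ → ℝ) (j : ℕ) (t : ℝ) : ℝ :=
  a t j * Real.exp (Gint a j t)

lemma acont {f0 : ℝ} {a : ℝ → ℕ → ℝ} (ha : IsDyadicSolution f0 a) (j : ℕ) :
    ContinuousOn (fun s => a s j) (Ici 0) :=
  fun t ht => (ha.2 j t ht).continuousWithinAt

lemma hGderiv {f0 : ℝ} {a : ℝ → ℕ → ℝ} (ha : IsDyadicSolution f0 a) (j : ℕ)
    {t : ℝ} (ht : t ∈ Ici (0:ℝ)) :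
    HasDerivWithinAt (Gint a j) (lam ^ j * a t (j+1)) (Ici 0) t := by
  set c : ℝ → ℝ := fun s => lam ^ j * a s (j+1) with hc
  have hcc : ContinuousOn c (Ici 0) := continuousOn_const.mul (acont ha (j+1))
  have hint : IntervalIntegrable c volume 0 t := by
    apply hcc.mono ?_ |>.intervalIntegrable
    rw [Set.uIcc_of_le ht]
    exact Icc_subset_Ici_self
  rcases eq_or_lt_of_le (mem_Ici.mp ht : (0:ℝ) ≤ t) with rfl | hpos
  · exact intervalIntegral.integral_hasDerivWithinAt_right hint
      ((hcc.mono Ioi_subset_Ici_self).stronglyMeasurableAtFilter_nhdsWithin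
        measurableSet_Ioi 0)
      ((hcc 0 self_mem_Ici).mono Ioi_subset_Ici_self)
  · have hat : ContinuousAt c t := (hcc t (mem_Ici.mpr hpos.le)).continuousAt (Ici_mem_nhds hpos)
    exact (intervalIntegral.integral_hasDerivAt_right hint
      (ContinuousAt.stronglyMeasurableAtFilter isOpen_Ioi
        (fun x hx => (hcc x (mem_Ici.mpr (le_of_lt hx))).continuousAt (Ici_mem_nhds hx)) t hpos)
      hat).hasDerivWithinAt

lemma hFderiv {f0 : ℝ} {a : ℝ → ℕ → ℝ} (ha : IsDyadicSolution f0 a) (j : ℕ)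
    {t : ℝ} (ht : t ∈ Ici (0:ℝ)) :
    HasDerivWithinAt (Faux a j)
      ((dyadicRHS f0 (a t) j + lam ^ j * a t j * a t (j+1)) * Real.exp (Gint a j t))
      (Ici 0) t := by
  have h1 := (ha.2 j t ht).mul ((hGderiv ha j ht).exp)
  exact h1.congr_deriv (by ring)

lemma lam_pos : 0 < lam := by rw [lam]; positivity

lemma Fcont {f0 : ℝ} {a : ℝ → ℕ → ℝ} (ha : IsDyadicSolution f0 a) (j : ℕ) :
    ContinuousOn (Faux a j) (Ici 0) :=
  fun t ht => ((hFderiv ha j ht).continuousWithinAt)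

lemma deriv_eq_zero {f0 : ℝ} (b : ℕ → ℝ) :
    dyadicRHS f0 b 0 + lam ^ 0 * b 0 * b 1 = f0 := by
  simp [dyadicRHS]

lemma deriv_eq_succ {f0 : ℝ} (b : ℕ → ℝ) (j : ℕ) :
    dyadicRHS f0 b (j+1) + lam ^ (j+1) * b (j+1) * b (j+2) = lam ^ j * (b j)^2 := by
  simp [dyadicRHS]

lemma Fmono {f0 : ℝ} (hf0 : 0 < f0) {a : ℝ → ℕ → ℝ} (ha : IsDyadicSolution f0 a) (j : ℕ) :
    MonotoneOn (Faux a j) (Ici 0) := by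
  apply monotoneOn_of_hasDerivWithinAt_nonneg (convex_Ici 0) (Fcont ha j)
    (f' := fun x => (dyadicRHS f0 (a x) j + lam ^ j * a x j * a x (j+1)) * Real.exp (Gint a j x))
  · intro x hx
    rw [interior_Ici] at hx
    exact (hFderiv ha j (mem_Ici.mpr hx.le)).mono interior_subset
  · intro x _
    have hne : (0:ℝ) ≤ dyadicRHS f0 (a x) j + lam ^ j * a x j * a x (j+1) := by
      cases j with
      | zero => rw [deriv_eq_zero]; exact hf0.le
      | succ j =>
        rw [deriv_eq_succ]
        have := lam_pos
        positivity
    exact mul_nonneg hne (Real.exp_pos _).le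

lemma Faux_zero (a : ℝ → ℕ → ℝ) (j : ℕ) : Faux a j 0 = a 0 j := by
  simp [Faux, Gint]

lemma a_nonneg {f0 : ℝ} (hf0 : 0 < f0) {a : ℝ → ℕ → ℝ} (ha : IsDyadicSolution f0 a)
    (h0 : ∀ j, 0 ≤ a 0 j) (j : ℕ) {t : ℝ} (ht : 0 ≤ t) : 0 ≤ a t j := by
  have h := Fmono hf0 ha j self_mem_Ici (mem_Ici.mpr ht) ht
  rw [Faux_zero] at h
  have he := Real.exp_pos (Gint a j t)
  have h0j := h0 j
  unfold Faux at h
  nlinarith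

theorem solution_positivity (f0 : ℝ) (hf0 : 0 < f0) (a : ℝ → ℕ → ℝ)
    (ha : IsDyadicSolution f0 a) (h0 : ∀ j, 0 ≤ a 0 j) :
    ∀ j, ∀ t : ℝ, 0 < t → 0 < a t j := by
  intro j
  induction j with
  | zero =>
    intro t ht
    have hs : StrictMonoOn (Faux a 0) (Ici 0) := by
      apply strictMonoOn_of_hasDerivWithinAt_pos (convex_Ici 0) (Fcont ha 0)
        (f' := fun x => (dyadicRHS f0 (a x) 0 + lam ^ 0 * a x 0 * a x 1) * Real.exp (Gint a 0 x))
      · intro x hx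
        rw [interior_Ici] at hx
        exact (hFderiv ha 0 (mem_Ici.mpr hx.le)).mono interior_subset
      · intro x _
        rw [deriv_eq_zero]
        exact mul_pos hf0 (Real.exp_pos _)
    have h := hs self_mem_Ici (mem_Ici.mpr ht.le) ht
    rw [Faux_zero] at h
    have he := Real.exp_pos (Gint a 0 t)
    have h00 := h0 0
    unfold Faux at h
    nlinarith
  | succ j IH =>
    intro t ht
    have ht2 : (0:ℝ) < t/2 := by linarith
    have hsub : Ici (t/2) ⊆ Ici (0:ℝ) := Ici_subset_Ici.mpr ht2.le
    have hs : StrictMonoOn (Faux a (j+1)) (Ici (t/2)) := by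
      apply strictMonoOn_of_hasDerivWithinAt_pos (convex_Ici (t/2)) ((Fcont ha (j+1)).mono hsub)
        (f' := fun x => (dyadicRHS f0 (a x) (j+1) + lam ^ (j+1) * a x (j+1) * a x (j+2)) *
          Real.exp (Gint a (j+1) x))
      · intro x hx
        rw [interior_Ici] at hx
        exact ((hFderiv ha (j+1) (mem_Ici.mpr (ht2.le.trans hx.le))).mono
          (interior_subset.trans hsub))
      · intro x hx
        rw [interior_Ici] at hx
        rw [deriv_eq_succ]
        have haj : 0 < a x j := IH x (ht2.trans hx)
        have := lam_pos
        positivity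
    have h1 : Faux a (j+1) (t/2) < Faux a (j+1) t :=
      hs (self_mem_Ici) (mem_Ici.mpr (by linarith)) (by linarith)
    have h2 : Faux a (j+1) 0 ≤ Faux a (j+1) (t/2) :=
      Fmono hf0 ha (j+1) self_mem_Ici (mem_Ici.mpr ht2.le) ht2.le
    rw [Faux_zero] at h2
    have he := Real.exp_pos (Gint a (j+1) t)
    have h0j := h0 (j+1)
    unfold Faux at h1 h2
    nlinarith
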